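/- Let Π be a set of 2T−1 permutations of [k]. Then there exists a subset I ⊆ Π of size T such that the T words in I have a common subsequence of length at least k^{1/C(2T−1,T)}. -/

import Mathlib

/-- A permutation of `{0, …, k-1}`: each letter occurs exactly once. -/
def IsPerm (k : ℕ) (w : List ℕ) : Prop :=
  (∀ a ∈ w, a < k) ∧ ∀ l < k, w.count l = 1

/-- Height-with-fuel of an element w.r.t. a relation. -/
def htAux {α : Type*} [Fintype α] (r : α → α → Prop) [DecidableRel r] : ℕ → α → ℕ
  | 0, _ => 0
  | n+1, a => ((Finset.univ.filter (fun b => r b a)).sup (htAux r n)) + 1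

lemma htAux_stab {α : Type*} [Fintype α] (r : α → α → Prop) [DecidableRel r]
    (meas : α → ℕ) (hm : ∀ a b, r a b → meas a < meas b) :
    ∀ n a, meas a < n → htAux r (n+1) a = htAux r n a := by
  intro n
  induction n with
  | zero => intro a h; omega
  | succ n IH =>
    intro a h
    show ((Finset.univ.filter (fun b => r b a)).sup (htAux r (n+1))) + 1
       = ((Finset.univ.filter (fun b => r b a)).sup (htAux r n)) + 1
    congr 1
    refine Finset.sup_congr rfl fun b hb => ?_
    rw [Finset.mem_filter] at hb
    exact IH b (by have := hm b a hb.2; omega)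

lemma htAux_strict {α : Type*} [Fintype α] (r : α → α → Prop) [DecidableRel r]
    (meas : α → ℕ) (hm : ∀ a b, r a b → meas a < meas b)
    {a b : α} {n : ℕ} (hab : r a b) (hbn : meas b < n) :
    htAux r n a < htAux r n b := by
  obtain ⟨m, rfl⟩ : ∃ m, n = m + 1 := ⟨n - 1, by omega⟩
  have ham : meas a < m := by have := hm a b hab; omega
  have h1 : htAux r (m+1) a = htAux r m a := htAux_stab r meas hm m a ham
  have h2 : htAux r m a ≤ (Finset.univ.filter (fun c => r c b)).sup (htAux r m) :=
    Finset.le_sup (by simp [hab])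
  calc htAux r (m+1) a = htAux r m a := h1
    _ < ((Finset.univ.filter (fun c => r c b)).sup (htAux r m)) + 1 := by omega
    _ = htAux r (m+1) b := rfl

lemma htAux_pos {α : Type*} [Fintype α] (r : α → α → Prop) [DecidableRel r]
    {n : ℕ} (hn : 0 < n) (a : α) : 1 ≤ htAux r n a := by
  obtain ⟨m, rfl⟩ : ∃ m, n = m + 1 := ⟨n - 1, by omega⟩
  show _ ≤ _ + 1
  omega

lemma htAux_realize {α : Type*} [Fintype α] (r : α → α → Prop) [DecidableRel r] :
    ∀ (n : ℕ) (a : α), ∃ l : List α, l.Chain' r ∧ l.getLast? = some a ∧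
      htAux r n a ≤ l.length := by
  intro n
  induction n with
  | zero => intro a; exact ⟨[a], List.isChain_singleton a, by simp, by simp [htAux]⟩
  | succ n IH =>
    intro a
    by_cases hne : (Finset.univ.filter (fun b => r b a)).Nonempty
    · obtain ⟨b, hb, hsup⟩ := Finset.exists_mem_eq_sup _ hne (htAux r n)
      rw [Finset.mem_filter] at hb
      obtain ⟨l, hc, hlast, hlen⟩ := IH b
      refine ⟨l ++ [a], ?_, List.getLast?_concat, ?_⟩
      · unfold List.Chain'; rw [List.isChain_append]
        refine ⟨hc, by simp, ?_⟩
        intro x hx y hy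
        simp only [List.head?_cons, Option.mem_def, Option.some.injEq] at hy
        rw [hlast] at hx
        simp only [Option.mem_def, Option.some.injEq] at hx
        subst hx; subst hy; exact hb.2
      · have heq : htAux r (n+1) a = htAux r n b + 1 := by
          show _ + 1 = _; rw [hsup]
        rw [heq]; simp; omega
    · refine ⟨[a], List.isChain_singleton a, by simp, ?_⟩
      have heq : htAux r (n+1) a = 0 + 1 := by
        show _ + 1 = _
        rw [Finset.not_nonempty_iff_eq_empty.mp hne]
        simp
      simp [heq]

theorem stmt15 (T k : ℕ) (hT : 1 ≤ T) (π : Fin (2 * T - 1) → List ℕ)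
    (hπ : ∀ i, IsPerm k (π i)) :
    ∃ I : Finset (Fin (2 * T - 1)), I.card = T ∧
      ∃ w : List ℕ, (∀ i ∈ I, w.Sublist (π i)) ∧
        (w.length : ℝ) ≥ (k : ℝ) ^ ((1 : ℝ) / ((2 * T - 1).choose T)) := by
  classical
  set N := (2 * T - 1).choose T with hNdef
  have hTle : T ≤ 2 * T - 1 := by omega
  have hN : 0 < N := Nat.choose_pos hTle
  rcases Nat.eq_zero_or_pos k with rfl | hk
  · obtain ⟨I, _, hIcard⟩ := Finset.exists_subset_card_eq
      (show T ≤ (Finset.univ : Finset (Fin (2 * T - 1))).card by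
        simp only [Finset.card_univ, Fintype.card_fin]; omega)
    refine ⟨I, hIcard, [], by simp, ?_⟩
    simp only [List.length_nil, Nat.cast_zero]
    rw [Real.zero_rpow (by positivity)]
  -- main case
  have hlen : ∀ i, (π i).length = k := by
    intro i
    have hperm : (π i).Perm (List.range k) := by
      rw [List.perm_iff_count]
      intro a
      rcases lt_or_ge a k with h | h
      · rw [(hπ i).2 a h,
          List.count_eq_one_of_mem List.nodup_range (List.mem_range.mpr h)]
      · rw [List.count_eq_zero.mpr (fun hmem => absurd ((hπ i).1 a hmem) (by omega)),
            List.count_eq_zero.mpr (by simp only [List.mem_range]; omega)]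
    rw [hperm.length_eq, List.length_range]
  have hmem : ∀ (i) (a : Fin k), (a : ℕ) ∈ π i := by
    intro i a
    have h1 := (hπ i).2 a a.isLt
    have h2 : 0 < (π i).count (a : ℕ) := by omega
    exact List.count_pos_iff.mp h2
  have hposlt : ∀ (i) (a : Fin k), (π i).idxOf (a : ℕ) < (π i).length :=
    fun i a => List.idxOf_lt_length_iff.mpr (hmem i a)
  have hposlt' : ∀ (i) (a : Fin k), (π i).idxOf (a : ℕ) < k :=
    fun i a => (hlen i) ▸ hposlt i a
  have hposinj : ∀ (i) (a b : Fin k),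
      (π i).idxOf (a:ℕ) = (π i).idxOf (b:ℕ) → a = b := by
    intro i a b h
    exact Fin.val_injective ((List.idxOf_inj (hmem i a)).mp h)
  let r : Finset (Fin (2 * T - 1)) → Fin k → Fin k → Prop :=
    fun I a b => ∀ i ∈ I, (π i).idxOf (a:ℕ) < (π i).idxOf (b:ℕ)
  let S := {I : Finset (Fin (2 * T - 1)) // I.card = T}
  let H : S → Fin k → ℕ := fun s a => htAux (r s.val) k a
  have hSne : ∀ s : S, s.val.Nonempty := fun s =>
    Finset.card_pos.mp (by rw [s.prop]; omega)
  have hstrict : ∀ (s : S) (a b : Fin k), r s.val a b → H s a < H s b := by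
    intro s a b hab
    obtain ⟨i₀, hi₀⟩ := hSne s
    exact htAux_strict (r s.val) (fun a : Fin k => (π i₀).idxOf (a:ℕ))
      (fun a b h => h i₀ hi₀) hab (hposlt' i₀ b)
  have hcomp : ∀ a b : Fin k, a ≠ b → ∃ s : S, r s.val a b ∨ r s.val b a := by
    intro a b hab
    have hne : ∀ i, (π i).idxOf (a:ℕ) ≠ (π i).idxOf (b:ℕ) :=
      fun i h => hab (hposinj i a b h)
    set A := Finset.univ.filter
      (fun i : Fin (2 * T - 1) => (π i).idxOf (a:ℕ) < (π i).idxOf (b:ℕ)) with hA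
    rcases le_or_gt T A.card with h | h
    · obtain ⟨I, hIA, hIcard⟩ := Finset.exists_subset_card_eq h
      refine ⟨⟨I, hIcard⟩, Or.inl fun i hi => ?_⟩
      have h2 := hIA hi
      rw [hA, Finset.mem_filter] at h2
      exact h2.2
    · have hAc : T ≤ Aᶜ.card := by
        rw [Finset.card_compl]
        simp only [Fintype.card_fin]
        omega
      obtain ⟨I, hIA, hIcard⟩ := Finset.exists_subset_card_eq hAc
      refine ⟨⟨I, hIcard⟩, Or.inr fun i hi => ?_⟩
      have hiA := hIA hi
      rw [Finset.mem_compl, hA, Finset.mem_filter] at hiA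
      have h3 : ¬ (π i).idxOf (a:ℕ) < (π i).idxOf (b:ℕ) :=
        fun hc => hiA ⟨Finset.mem_univ i, hc⟩
      have h4 := hne i
      omega
  let F : Fin k → (S → ℕ) := fun a s => H s a
  have hinj : Function.Injective F := by
    intro a b hFeq
    by_contra hab
    obtain ⟨s, hs | hs⟩ := hcomp a b hab
    · exact absurd (congrFun hFeq s) (Nat.ne_of_lt (hstrict s a b hs))
    · exact absurd (congrFun hFeq s).symm (Nat.ne_of_lt (hstrict s b a hs))
  let M : S → ℕ := fun s => Finset.univ.sup (H s)
  have hFmem : ∀ a, F a ∈ Fintype.piFinset (fun s => Finset.Icc 1 (M s)) := by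
    intro a
    rw [Fintype.mem_piFinset]
    intro s
    rw [Finset.mem_Icc]
    exact ⟨htAux_pos _ hk a, Finset.le_sup (Finset.mem_univ a)⟩
  have hcard : k ≤ ∏ s : S, M s := by
    calc k = (Finset.univ : Finset (Fin k)).card := by simp
      _ ≤ (Fintype.piFinset fun s => Finset.Icc 1 (M s)).card :=
          Finset.card_le_card_of_injOn F (fun a _ => hFmem a) hinj.injOn
      _ = ∏ s : S, (Finset.Icc 1 (M s)).card := Fintype.card_piFinset _
      _ = ∏ s : S, M s := by simp [Nat.card_Icc]
  haveI hSnonempty : Nonempty S := by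
    obtain ⟨I, _, hIcard⟩ := Finset.exists_subset_card_eq
      (show T ≤ (Finset.univ : Finset (Fin (2 * T - 1))).card by
        simp only [Finset.card_univ, Fintype.card_fin]; omega)
    exact ⟨⟨I, hIcard⟩⟩
  obtain ⟨s₀, _, hs₀⟩ :=
    Finset.exists_mem_eq_sup (Finset.univ : Finset S) Finset.univ_nonempty M
  have hcardS : Fintype.card S = N := by
    rw [hNdef]
    exact (Fintype.card_finset_len T).trans (by rw [Fintype.card_fin])
  have hMN : k ≤ (M s₀) ^ N := by
    calc k ≤ ∏ s : S, M s := hcard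
      _ ≤ ∏ _s : S, M s₀ := Finset.prod_le_prod' (fun s _ => hs₀ ▸ Finset.le_sup (Finset.mem_univ s))
      _ = (M s₀) ^ N := by rw [Finset.prod_const, Finset.card_univ, hcardS]
  have hrpow : ((k:ℝ)) ^ ((1:ℝ)/(N:ℝ)) ≤ (M s₀ : ℝ) := by
    have h0 : (0:ℝ) ≤ (k:ℝ) := by positivity
    have h1 : (k:ℝ) ≤ (M s₀ : ℝ) ^ (N:ℕ) := by exact_mod_cast hMN
    have h2 := Real.rpow_le_rpow h0 h1 (by positivity : (0:ℝ) ≤ 1/(N:ℝ))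
    rwa [← Real.rpow_natCast ((M s₀ : ℝ)) N, ← Real.rpow_mul (by positivity),
      mul_one_div, div_self (by exact_mod_cast hN.ne' : (N:ℝ) ≠ 0),
      Real.rpow_one] at h2
  haveI : Nonempty (Fin k) := ⟨⟨0, hk⟩⟩
  obtain ⟨a₀, _, ha₀⟩ :=
    Finset.exists_mem_eq_sup (Finset.univ : Finset (Fin k)) Finset.univ_nonempty (H s₀)
  obtain ⟨l, hchain, hlast, hllen⟩ := htAux_realize (r s₀.val) k a₀
  refine ⟨s₀.val, s₀.prop, l.map Fin.val, ?_, ?_⟩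
  · intro i hi
    have hchain2 : l.Chain'
        (fun a b : Fin k => (π i).idxOf (a:ℕ) < (π i).idxOf (b:ℕ)) :=
      List.IsChain.imp (fun a b hab => hab i hi) hchain
    haveI : IsTrans (Fin k)
        (fun a b : Fin k => (π i).idxOf (a:ℕ) < (π i).idxOf (b:ℕ)) :=
      ⟨fun a b c => lt_trans⟩
    have hpair := (List.isChain_iff_pairwise).mp hchain2
    have hsub : ((l.map (fun a : Fin k =>
        (⟨(π i).idxOf (a:ℕ), hposlt i a⟩ : Fin (π i).length))).map
          (π i).get).Sublist (π i) := by
      apply List.map_getElem_sublist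
      rw [List.pairwise_map]
      exact hpair
    have heq : (l.map (fun a : Fin k =>
        (⟨(π i).idxOf (a:ℕ), hposlt i a⟩ : Fin (π i).length))).map (π i).get
        = l.map Fin.val := by
      rw [List.map_map]
      exact List.map_congr_left (fun a _ => List.idxOf_get (hposlt i a))
    rwa [heq] at hsub
  · rw [List.length_map, ge_iff_le]
    refine le_trans hrpow ?_
    have hMl : M s₀ ≤ l.length := by
      calc M s₀ = H s₀ a₀ := ha₀
      _ ≤ l.length := hllen
    exact_mod_cast hMl
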